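/- If 𝔉 and 𝔊 are asymptotically alike coarse ultrafilters on a metric space X and f : X → Y is a coarse map to a metric space Y, then f_*𝔉 and f_*𝔊 are asymptotically alike coarse ultrafilters on Y. -/
import Mathlib


open Set Bornology Metric

/-- `E ⊆ X × X` is an entourage if `sup_{(x,y) ∈ E} d(x,y) < ∞`. -/
def IsEnt {X : Type*} [PseudoMetricSpace X] (E : Set (X × X)) : Prop :=
  ∃ C : ℝ, ∀ p ∈ E, dist p.1 p.2 ≤ C

/-- `E[A] = {y : ∃ a ∈ A, (a,y) ∈ E}`. -/
def entImg {X : Type*} [PseudoMetricSpace X] (E : Set (X × X)) (A : Set X) : Set X :=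
  {y | ∃ a ∈ A, (a, y) ∈ E}

/-- `A` and `B` are not coarsely disjoint: some entourage `E` has `E[A] ∩ E[B]` unbounded. -/
def NotCD {X : Type*} [PseudoMetricSpace X] (A B : Set X) : Prop :=
  ∃ E : Set (X × X), IsEnt E ∧ ¬ IsBounded (entImg E A ∩ entImg E B)

/-- `A` and `B` are coarsely disjoint: every entourage `E` has `E[A] ∩ E[B]` bounded. -/
def CD {X : Type*} [PseudoMetricSpace X] (A B : Set X) : Prop :=
  ∀ E : Set (X × X), IsEnt E → IsBounded (entImg E A ∩ entImg E B)

/-- Coarsely uniform: `f × f` maps entourages to entourages. -/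
def CUnif {X Y : Type*} [PseudoMetricSpace X] [PseudoMetricSpace Y] (f : X → Y) : Prop :=
  ∀ E : Set (X × X), IsEnt E → IsEnt ((fun p : X × X => (f p.1, f p.2)) '' E)

/-- Coarsely proper: preimages of bounded sets are bounded. -/
def CProper {X Y : Type*} [PseudoMetricSpace X] [PseudoMetricSpace Y] (f : X → Y) : Prop :=
  ∀ B : Set Y, IsBounded B → IsBounded (f ⁻¹' B)

/-- A coarse map is coarsely uniform and coarsely proper. -/
def Coarse {X Y : Type*} [PseudoMetricSpace X] [PseudoMetricSpace Y] (f : X → Y) : Prop :=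
  CUnif f ∧ CProper f

/-- Coarsely injective: `(f × f)⁻¹` of any entourage is an entourage. -/
def CInj {X Y : Type*} [PseudoMetricSpace X] [PseudoMetricSpace Y] (f : X → Y) : Prop :=
  ∀ F : Set (Y × Y), IsEnt F → IsEnt ((fun p : X × X => (f p.1, f p.2)) ⁻¹' F)

/-- A coarse ultrafilter on a metric space. -/
structure CUF (X : Type*) [PseudoMetricSpace X] where
  sets : Set (Set X)
  pairClose : ∀ A ∈ sets, ∀ B ∈ sets, NotCD A B
  split : ∀ A B : Set X, A ∪ B ∈ sets → A ∈ sets ∨ B ∈ sets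
  univ_mem : Set.univ ∈ sets

/-- Pushforward system of sets of a coarse ultrafilter along a map. -/
def push {X Y : Type*} [PseudoMetricSpace X] [PseudoMetricSpace Y] (f : X → Y) (F : CUF X) :
    Set (Set Y) :=
  {A : Set Y | f ⁻¹' A ∈ F.sets}

/-- Asymptotically alike coarse ultrafilters. -/
def AAlike {X : Type*} [PseudoMetricSpace X] (F G : CUF X) : Prop :=
  ∀ A ∈ F.sets, ∀ B ∈ G.sets, NotCD A B

/-- Asymptotically alike, on raw systems of subsets. -/
def AAlikeS {X : Type*} [PseudoMetricSpace X] (S T : Set (Set X)) : Prop :=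
  ∀ A ∈ S, ∀ B ∈ T, NotCD A B

/-- pushforwards of asymptotically alike coarse ultrafilters along a coarse
map are asymptotically alike coarse ultrafilters. -/

lemma notCD_push {X Y : Type*} [MetricSpace X] [MetricSpace Y] (f : X → Y)
    (hf : Coarse f) (A' B' : Set Y) (h : NotCD (f ⁻¹' A') (f ⁻¹' B')) : NotCD A' B' := by
  obtain ⟨E, hE, hub⟩ := h
  refine ⟨(fun p : X × X => (f p.1, f p.2)) '' E, hf.1 E hE, fun hb => hub ?_⟩
  refine ((hf.2 _ hb).subset ?_)
  rintro x ⟨⟨a, ha, haE⟩, ⟨b, hb', hbE⟩⟩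
  exact ⟨⟨f a, ha, ⟨(a, x), haE, rfl⟩⟩, ⟨f b, hb', ⟨(b, x), hbE, rfl⟩⟩⟩

theorem stmt5 {X Y : Type*} [MetricSpace X] [MetricSpace Y] (f : X → Y)
    (hf : Coarse f) (F G : CUF X) (h : AAlike F G) :
    (∃ F' : CUF Y, F'.sets = push f F) ∧
    (∀ F' G' : CUF Y, F'.sets = push f F → G'.sets = push f G → AAlike F' G') := by
  constructor
  · exact ⟨⟨push f F, fun A hA B hB => notCD_push f hf A B (F.pairClose _ hA _ hB),
      fun A B hAB => F.split _ _ hAB, F.univ_mem⟩, rfl⟩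
  · intro F' G' hF hG A hA B hB
    rw [hF] at hA
    rw [hG] at hB
    exact notCD_push f hf A B (h _ hA _ hB)
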